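/- arXiv:1410.5161 — 3 statements merged into one kernel-verified Lean document; each statement's English description precedes it below -/
import Mathlib

section
/- If (A, m, η, Δ, ε) is a bialgebra over a field k and α : A → A is a bialgebra isomorphism, then (A, α, α∘m, η, Δ∘α⁻¹, ε) is a monoidal Hom-bialgebra, i.e. (A, α∘m, η) satisfies the Hom-associativity law α(a)·(b·c) = (a·b)·α(c) and Hom-unitality 1·a = a·1 = α(a), (A, Δ∘α⁻¹, ε) satisfies the dual Hom-coassociativity and Hom-counitality, and Δ∘α⁻¹ and ε are multiplicative for the twisted product. -/
open TensorProduct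

noncomputable section
namespace HomTwist

variable {k : Type*} [CommRing k]

section Defs
variable {H₁ H₂ A B : Type*} [AddCommGroup H₁] [Module k H₁] [AddCommGroup H₂] [Module k H₂]
  [AddCommGroup A] [Module k A] [AddCommGroup B] [Module k B]

/-- The componentwise "action" of `H₁ ⊗ H₂` on `A ⊗ B` induced by bilinear actions
`f : H₁ → A → A` and `g : H₂ → B → B`:  `(h₁ ⊗ h₂) • (a ⊗ b) = (f h₁ a) ⊗ (g h₂ b)`. -/
def pairMap (f : H₁ →ₗ[k] A →ₗ[k] A) (g : H₂ →ₗ[k] B →ₗ[k] B) :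
    (H₁ ⊗[k] H₂) →ₗ[k] (A ⊗[k] B) →ₗ[k] A ⊗[k] B :=
  TensorProduct.lift (((TensorProduct.mapBilinear (RingHom.id k) A B A B).comp f).compl₂ g)

end Defs

section Structures
variable {H : Type*} [AddCommGroup H] [Module k H]

/-- Componentwise product on `H ⊗ H` induced by a bilinear multiplication on `H`. -/
def mulT (mul : H →ₗ[k] H →ₗ[k] H) : (H ⊗[k] H) →ₗ[k] (H ⊗[k] H) →ₗ[k] H ⊗[k] H :=
  pairMap mul mul

/-- Componentwise product on `H ⊗ (H ⊗ H)`. -/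
def mulT3 (mul : H →ₗ[k] H →ₗ[k] H) :
    (H ⊗[k] (H ⊗[k] H)) →ₗ[k] (H ⊗[k] (H ⊗[k] H)) →ₗ[k] H ⊗[k] (H ⊗[k] H) :=
  pairMap mul (mulT mul)

/-- `(r ⊗ R) ↦ r⁽¹⁾ ⊗ (R⁽¹⁾ ⊗ r⁽²⁾R⁽²⁾)`. -/
def hexA (mul : H →ₗ[k] H →ₗ[k] H) :
    ((H ⊗[k] H) ⊗[k] (H ⊗[k] H)) →ₗ[k] H ⊗[k] (H ⊗[k] H) :=
  (TensorProduct.assoc k H H H).toLinearMap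
    ∘ₗ TensorProduct.map LinearMap.id (TensorProduct.lift mul)
    ∘ₗ (TensorProduct.tensorTensorTensorComm k H H H H).toLinearMap

/-- `(r ⊗ R) ↦ r⁽¹⁾R⁽¹⁾ ⊗ (R⁽²⁾ ⊗ r⁽²⁾)`. -/
def hexB (mul : H →ₗ[k] H →ₗ[k] H) :
    ((H ⊗[k] H) ⊗[k] (H ⊗[k] H)) →ₗ[k] H ⊗[k] (H ⊗[k] H) :=
  TensorProduct.map (TensorProduct.lift mul) (TensorProduct.comm k H H).toLinearMap
    ∘ₗ (TensorProduct.tensorTensorTensorComm k H H H H).toLinearMap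

/-- Axioms of a monoidal Hom-bialgebra (Caenepeel–Goyvaerts). -/
structure IsMonHomBialgebra (mul : H →ₗ[k] H →ₗ[k] H) (one : H) (alpha : H ≃ₗ[k] H)
    (comul : H →ₗ[k] H ⊗[k] H) (counit : H →ₗ[k] k) : Prop where
  alpha_mul : ∀ a b, alpha (mul a b) = mul (alpha a) (alpha b)
  hom_assoc : ∀ a b c, mul (alpha a) (mul b c) = mul (mul a b) (alpha c)
  alpha_one : alpha one = one
  one_mul' : ∀ a, mul one a = alpha a
  mul_one' : ∀ a, mul a one = alpha a
  comul_alpha : ∀ c, comul (alpha c)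
      = TensorProduct.map alpha.toLinearMap alpha.toLinearMap (comul c)
  hom_coassoc : ∀ c,
      TensorProduct.map alpha.symm.toLinearMap comul (comul c)
        = TensorProduct.assoc k H H H
            (TensorProduct.map comul alpha.symm.toLinearMap (comul c))
  counit_alpha : ∀ c, counit (alpha c) = counit c
  counit_id : ∀ c, TensorProduct.lid k H
      (TensorProduct.map counit LinearMap.id (comul c)) = alpha.symm c
  id_counit : ∀ c, TensorProduct.rid k H
      (TensorProduct.map LinearMap.id counit (comul c)) = alpha.symm c
  comul_mul : ∀ a b, comul (mul a b) = mulT mul (comul a) (comul b)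
  comul_one : comul one = one ⊗ₜ[k] one
  counit_mul : ∀ a b, counit (mul a b) = counit a * counit b
  counit_one : counit one = 1

/-- Axioms of a (Makhlouf–Silvestrov) Hom-bialgebra (with bijective structure map). -/
structure IsHomBialgebra (mul : H →ₗ[k] H →ₗ[k] H) (one : H) (alpha : H ≃ₗ[k] H)
    (comul : H →ₗ[k] H ⊗[k] H) (counit : H →ₗ[k] k) : Prop where
  alpha_mul : ∀ a b, alpha (mul a b) = mul (alpha a) (alpha b)
  hom_assoc : ∀ a b c, mul (alpha a) (mul b c) = mul (mul a b) (alpha c)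
  alpha_one : alpha one = one
  one_mul' : ∀ a, mul one a = alpha a
  mul_one' : ∀ a, mul a one = alpha a
  comul_alpha : ∀ c, comul (alpha c)
      = TensorProduct.map alpha.toLinearMap alpha.toLinearMap (comul c)
  hom_coassoc : ∀ c,
      TensorProduct.map alpha.toLinearMap comul (comul c)
        = TensorProduct.assoc k H H H
            (TensorProduct.map comul alpha.toLinearMap (comul c))
  counit_alpha : ∀ c, counit (alpha c) = counit c
  counit_id : ∀ c, TensorProduct.lid k H
      (TensorProduct.map counit LinearMap.id (comul c)) = alpha c
  id_counit : ∀ c, TensorProduct.rid k H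
      (TensorProduct.map LinearMap.id counit (comul c)) = alpha c
  comul_mul : ∀ a b, comul (mul a b) = mulT mul (comul a) (comul b)
  comul_one : comul one = one ⊗ₜ[k] one
  counit_mul : ∀ a b, counit (mul a b) = counit a * counit b
  counit_one : counit one = 1

/-- Axioms of an ordinary (possibly noncommutative) bialgebra, given by raw data. -/
structure IsBialgebra (mul : H →ₗ[k] H →ₗ[k] H) (one : H)
    (comul : H →ₗ[k] H ⊗[k] H) (counit : H →ₗ[k] k) : Prop where
  assoc : ∀ a b c, mul (mul a b) c = mul a (mul b c)
  one_mul' : ∀ a, mul one a = a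
  mul_one' : ∀ a, mul a one = a
  coassoc : ∀ c, TensorProduct.map LinearMap.id comul (comul c)
      = TensorProduct.assoc k H H H (TensorProduct.map comul LinearMap.id (comul c))
  counit_id : ∀ c, TensorProduct.lid k H
      (TensorProduct.map counit LinearMap.id (comul c)) = c
  id_counit : ∀ c, TensorProduct.rid k H
      (TensorProduct.map LinearMap.id counit (comul c)) = c
  comul_mul : ∀ a b, comul (mul a b) = mulT mul (comul a) (comul b)
  comul_one : comul one = one ⊗ₜ[k] one
  counit_mul : ∀ a b, counit (mul a b) = counit a * counit b
  counit_one : counit one = 1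

/-- A Drinfeld twist `σ` (with inverse `ϱ`) for a monoidal Hom-bialgebra. -/
structure IsTwist (mul : H →ₗ[k] H →ₗ[k] H) (one : H) (alpha : H ≃ₗ[k] H)
    (comul : H →ₗ[k] H ⊗[k] H) (counit : H →ₗ[k] k) (σ ϱ : H ⊗[k] H) : Prop where
  mul_inv : mulT mul σ ϱ = one ⊗ₜ[k] one
  inv_mul : mulT mul ϱ σ = one ⊗ₜ[k] one
  T1 : TensorProduct.map alpha.toLinearMap alpha.toLinearMap σ = σ
  T2l : TensorProduct.lid k H (TensorProduct.map counit LinearMap.id σ) = one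
  T2r : TensorProduct.rid k H (TensorProduct.map LinearMap.id counit σ) = one
  T3 : TensorProduct.map LinearMap.id (mulT mul σ)
        (TensorProduct.map LinearMap.id comul σ)
      = TensorProduct.assoc k H H H
          (TensorProduct.map (mulT mul σ) LinearMap.id
            (TensorProduct.map comul LinearMap.id σ))

/-- The `R`-matrix axioms (Q1)–(Q4) for a monoidal Hom-bialgebra. -/
structure IsRMatrix (mul : H →ₗ[k] H →ₗ[k] H) (alpha : H ≃ₗ[k] H)
    (comul : H →ₗ[k] H ⊗[k] H) (R : H ⊗[k] H) : Prop where
  Q1 : TensorProduct.map alpha.toLinearMap alpha.toLinearMap R = R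
  Q2 : ∀ h, mulT mul R (comul h)
      = mulT mul (TensorProduct.comm k H H (comul h)) R
  Q3 : TensorProduct.assoc k H H H (TensorProduct.map comul LinearMap.id R)
      = hexA mul (R ⊗ₜ[k] R)
  Q4 : TensorProduct.map LinearMap.id comul R = hexB mul (R ⊗ₜ[k] R)

/-- Axioms of a monoidal Hom-algebra. -/
structure IsMonHomAlgebra {A : Type*} [AddCommGroup A] [Module k A]
    (mul : A →ₗ[k] A →ₗ[k] A) (one : A) (alpha : A ≃ₗ[k] A) : Prop where
  alpha_mul : ∀ a b, alpha (mul a b) = mul (alpha a) (alpha b)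
  hom_assoc : ∀ a b c, mul (alpha a) (mul b c) = mul (mul a b) (alpha c)
  alpha_one : alpha one = one
  one_mul' : ∀ a, mul one a = alpha a
  mul_one' : ∀ a, mul a one = alpha a

/-- Axioms of a monoidal Hom-coalgebra. -/
structure IsMonHomCoalgebra {C : Type*} [AddCommGroup C] [Module k C]
    (comul : C →ₗ[k] C ⊗[k] C) (counit : C →ₗ[k] k) (alpha : C ≃ₗ[k] C) : Prop where
  comul_alpha : ∀ c, comul (alpha c)
      = TensorProduct.map alpha.toLinearMap alpha.toLinearMap (comul c)
  hom_coassoc : ∀ c,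
      TensorProduct.map alpha.symm.toLinearMap comul (comul c)
        = TensorProduct.assoc k C C C
            (TensorProduct.map comul alpha.symm.toLinearMap (comul c))
  counit_alpha : ∀ c, counit (alpha c) = counit c
  counit_id : ∀ c, TensorProduct.lid k C
      (TensorProduct.map counit LinearMap.id (comul c)) = alpha.symm c
  id_counit : ∀ c, TensorProduct.rid k C
      (TensorProduct.map LinearMap.id counit (comul c)) = alpha.symm c

/-- Axioms of a left `H`-Hom-module. -/
structure IsHomModule {M : Type*} [AddCommGroup M] [Module k M]
    (mul : H →ₗ[k] H →ₗ[k] H) (one : H) (alpha : H ≃ₗ[k] H)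
    (alM : M ≃ₗ[k] M) (act : H →ₗ[k] M →ₗ[k] M) : Prop where
  compat : ∀ h m, alM (act h m) = act (alpha h) (alM m)
  hom_smul : ∀ h h' m, act (alpha h) (act h' m) = act (mul h h') (alM m)
  one_smul' : ∀ m, act one m = alM m

/-- The twisted coproduct `Δᵠ(x) = (σ Δ(x)) ϱ`. -/
def twistComul (mul : H →ₗ[k] H →ₗ[k] H) (comul : H →ₗ[k] H ⊗[k] H)
    (σ ϱ : H ⊗[k] H) : H →ₗ[k] H ⊗[k] H :=
  ((mulT mul).flip ϱ) ∘ₗ (mulT mul σ) ∘ₗ comul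

end Structures
end HomTwist
end

namespace HomTwist
open TensorProduct

lemma pairMap_tmul {k : Type*} [CommRing k] {H₁ H₂ A B : Type*}
    [AddCommGroup H₁] [Module k H₁] [AddCommGroup H₂] [Module k H₂]
    [AddCommGroup A] [Module k A] [AddCommGroup B] [Module k B]
    (f : H₁ →ₗ[k] A →ₗ[k] A) (g : H₂ →ₗ[k] B →ₗ[k] B)
    (h₁ : H₁) (h₂ : H₂) (a : A) (b : B) :
    pairMap f g (h₁ ⊗ₜ[k] h₂) (a ⊗ₜ[k] b) = f h₁ a ⊗ₜ[k] g h₂ b := by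
  simp [pairMap]

lemma mulT_eq_mul {k A : Type*} [Field k] [Ring A] [Algebra k A]
    (α : A ≃ₐ[k] A) (s t : A ⊗[k] A) :
    mulT ((LinearMap.mul k A).compr₂ α.toLinearMap) s t
      = TensorProduct.map α.toLinearMap α.toLinearMap (s * t) := by
  induction s using TensorProduct.induction_on with
  | zero => simp [mulT]
  | tmul a b =>
    induction t using TensorProduct.induction_on with
    | zero => simp [mulT]
    | tmul c d =>
      simp [mulT, pairMap_tmul, Algebra.TensorProduct.tmul_mul_tmul]
    | add x y hx hy => simp [mul_add, hx, hy]
  | add x y hx hy => simp [add_mul, hx, hy, map_add, LinearMap.add_apply]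

lemma hom_coassoc_aux {k A : Type*} [CommRing k] [AddCommGroup A] [Module k A]
    (Δ : A →ₗ[k] A ⊗[k] A) (s : A →ₗ[k] A)
    (hco : ∀ x : A, TensorProduct.assoc k A A A (LinearMap.rTensor A Δ (Δ x))
      = LinearMap.lTensor A Δ (Δ x))
    (hΔ : ∀ x : A, Δ (s x) = TensorProduct.map s s (Δ x)) (c : A) :
    TensorProduct.map s (Δ ∘ₗ s) (Δ (s c))
      = TensorProduct.assoc k A A A
          (TensorProduct.map (Δ ∘ₗ s) s (Δ (s c))) := by
  have hΔ' : Δ ∘ₗ s = TensorProduct.map s s ∘ₗ Δ := by ext x; exact hΔ x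
  have h1 : TensorProduct.map s (Δ ∘ₗ s)
      = TensorProduct.map s (TensorProduct.map s s) ∘ₗ LinearMap.lTensor A Δ := by
    rw [hΔ']; ext a b; simp
  have h2 : TensorProduct.map (Δ ∘ₗ s) s
      = TensorProduct.map (TensorProduct.map s s) s ∘ₗ LinearMap.rTensor A Δ := by
    rw [hΔ']; ext a b; simp
  rw [h1, h2]
  simp only [LinearMap.comp_apply]
  rw [← hco (s c), TensorProduct.map_map_assoc]

/-- A bialgebra `A` over a field `k` together with a bialgebra
isomorphism `α` yields the monoidal Hom-bialgebra `ᵅA = (A, α, α∘m, η, Δ∘α⁻¹, ε)`. -/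
theorem bialgebra_iso_gives_monoidal_hom_bialgebra
    {k A : Type*} [Field k] [Ring A] [Bialgebra k A]
    (α : A ≃ₐ[k] A)
    (hcomul : ∀ a : A, Coalgebra.comul (R := k) (α a)
      = TensorProduct.map α.toLinearMap α.toLinearMap (Coalgebra.comul (R := k) a))
    (hcounit : ∀ a : A, Coalgebra.counit (R := k) (α a) = Coalgebra.counit (R := k) a) :
    IsMonHomBialgebra ((LinearMap.mul k A).compr₂ α.toLinearMap) 1 α.toLinearEquiv
      ((Coalgebra.comul (R := k) (A := A)) ∘ₗ (α.symm : A ≃ₐ[k] A).toLinearMap)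
      (Coalgebra.counit (R := k) (A := A)) := by
  have hinv : ∀ a : A, Coalgebra.comul (R := k) (α.symm a)
      = TensorProduct.map α.symm.toLinearMap α.symm.toLinearMap
          (Coalgebra.comul (R := k) a) := by
    intro a
    have h := hcomul (α.symm a)
    rw [α.apply_symm_apply] at h
    have hid : TensorProduct.map α.symm.toLinearMap α.symm.toLinearMap ∘ₗ
        TensorProduct.map α.toLinearMap α.toLinearMap
          = (LinearMap.id : A ⊗[k] A →ₗ[k] A ⊗[k] A) := by
      ext x y; simp
    rw [h, ← LinearMap.comp_apply, hid, LinearMap.id_apply]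
  constructor
  · intro a b
    simp [map_mul]
  · intro a b c
    simp only [LinearMap.compr₂_apply, LinearMap.mul_apply', AlgEquiv.toLinearMap_apply,
      AlgEquiv.toLinearEquiv_apply, ← map_mul, mul_assoc]
  · simp
  · intro a; simp
  · intro a; simp
  · intro c
    simp only [LinearMap.comp_apply, AlgEquiv.toLinearMap_apply,
      AlgEquiv.toLinearEquiv_apply, AlgEquiv.toLinearEquiv_toLinearMap,
      α.symm_apply_apply]
    have h := hcomul (α.symm c)
    rw [α.apply_symm_apply] at h
    exact h
  · intro c
    simp only [LinearMap.comp_apply, AlgEquiv.toLinearEquiv_symm,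
      AlgEquiv.toLinearEquiv_toLinearMap, AlgEquiv.toLinearMap_apply]
    exact hom_coassoc_aux (Coalgebra.comul (R := k)) α.symm.toLinearMap
      (fun x => Coalgebra.coassoc_apply x)
      (fun x => by simpa using hinv x) c
  · intro c; simpa using hcounit c
  · intro c
    simp only [LinearMap.comp_apply]
    rw [show TensorProduct.map (Coalgebra.counit (R := k)) (LinearMap.id (R := k) (M := A))
        = LinearMap.rTensor A (Coalgebra.counit (R := k)) from rfl,
      Coalgebra.rTensor_counit_comul]
    simp
  · intro c
    simp only [LinearMap.comp_apply]
    rw [show TensorProduct.map (LinearMap.id (R := k) (M := A)) (Coalgebra.counit (R := k))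
        = LinearMap.lTensor A (Coalgebra.counit (R := k)) from rfl,
      Coalgebra.lTensor_counit_comul]
    simp
  · intro a b
    rw [mulT_eq_mul]
    simp only [LinearMap.comp_apply, LinearMap.compr₂_apply, LinearMap.mul_apply',
      AlgEquiv.toLinearMap_apply, α.symm_apply_apply]
    have h2 : Coalgebra.comul (R := k) (α.symm a) * Coalgebra.comul (R := k) (α.symm b)
        = Coalgebra.comul (R := k) (α.symm (a * b)) := by
      rw [map_mul, ← Bialgebra.comul_mul]
    rw [h2]
    have h3 := hcomul (α.symm (a * b))
    rw [α.apply_symm_apply] at h3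
    rw [← h3, Bialgebra.comul_mul]
  · simp [Algebra.TensorProduct.one_def]
  · intro a b
    simp [hcounit]
  · simp

end HomTwist
end

section
/- Let (H, α, R) be a quasitriangular monoidal Hom-bialgebra. Then R satisfies the quantum Hom-Yang-Baxter equations (R₁₂R₁₃)R₂₃ = R₂₃(R₁₃R₁₂) and R₁₂(R₁₃R₂₃) = (R₂₃R₁₃)R₁₂ in H⊗H⊗H, where R₁₂ = R⊗1_H, R₂₃ = 1_H⊗R, R₁₃ = (τ⊗id)(R₂₃), and multiplication in H⊗H⊗H is componentwise with the Hom-associative product of H. -/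
open TensorProduct

namespace HomTwist
open TensorProduct


section YBEAux
variable {k H : Type*} [CommRing k] [AddCommGroup H] [Module k H]
variable (mul : H →ₗ[k] H →ₗ[k] H) {one : H} {alpha : H ≃ₗ[k] H}

private lemma mulT_tmul' (a b c d : H) :
    mulT mul (a ⊗ₜ[k] b) (c ⊗ₜ[k] d) = mul a c ⊗ₜ[k] mul b d := by
  simp [mulT, pairMap]

private lemma mulT3_tmul' (a c : H) (b d : H ⊗[k] H) :
    mulT3 mul (a ⊗ₜ[k] b) (c ⊗ₜ[k] d) = mul a c ⊗ₜ[k] mulT mul b d := by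
  simp [mulT3, pairMap]

private lemma hexA_tmul' (x y z w : H) :
    hexA mul ((x ⊗ₜ[k] y) ⊗ₜ[k] (z ⊗ₜ[k] w)) = x ⊗ₜ[k] (z ⊗ₜ[k] mul y w) := by
  simp [hexA]

private lemma hexB_tmul' (x y z w : H) :
    hexB mul ((x ⊗ₜ[k] y) ⊗ₜ[k] (z ⊗ₜ[k] w)) = mul x z ⊗ₜ[k] (w ⊗ₜ[k] y) := by
  simp [hexB]

private lemma map_map_apply {M N P Q S T : Type*}
    [AddCommGroup M] [Module k M] [AddCommGroup N] [Module k N]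
    [AddCommGroup P] [Module k P] [AddCommGroup Q] [Module k Q]
    [AddCommGroup S] [Module k S] [AddCommGroup T] [Module k T]
    (f₁ : M →ₗ[k] P) (f₂ : P →ₗ[k] S) (g₁ : N →ₗ[k] Q) (g₂ : Q →ₗ[k] T) (x : M ⊗[k] N) :
    TensorProduct.map f₂ g₂ (TensorProduct.map f₁ g₁ x)
      = TensorProduct.map (f₂ ∘ₗ f₁) (g₂ ∘ₗ g₁) x := by
  rw [TensorProduct.map_comp]; rfl

private lemma comm_map_apply (f g : H →ₗ[k] H) (X : H ⊗[k] H) :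
    TensorProduct.map f g (TensorProduct.comm k H H X)
      = TensorProduct.comm k H H (TensorProduct.map g f X) := by
  induction X using TensorProduct.induction_on with
  | zero => simp
  | add u v ihu ihv => simp [ihu, ihv]
  | tmul a b => simp

private lemma L1 (hone : ∀ a, mul one a = alpha a) (hone' : ∀ a, mul a one = alpha a)
    (X Y : H ⊗[k] H) :
    mulT3 mul (TensorProduct.assoc k H H H (X ⊗ₜ[k] one))
        (TensorProduct.map LinearMap.id (TensorProduct.comm k H H).toLinearMap
          (TensorProduct.assoc k H H H (Y ⊗ₜ[k] one)))
      = TensorProduct.map LinearMap.id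
          ((TensorProduct.comm k H H).toLinearMap ∘ₗ
            TensorProduct.map alpha.toLinearMap alpha.toLinearMap)
          (hexB mul (X ⊗ₜ[k] Y)) := by
  induction X using TensorProduct.induction_on with
  | zero => simp
  | add u v ihu ihv => simp only [tmul_add, add_tmul, map_add, LinearMap.add_apply, TensorProduct.map_add_left, TensorProduct.map_add_right, ihu, ihv]
  | tmul x y =>
    induction Y using TensorProduct.induction_on with
    | zero => simp
    | add u v ihu ihv => simp only [tmul_add, add_tmul, map_add, LinearMap.add_apply, TensorProduct.map_add_left, TensorProduct.map_add_right, ihu, ihv]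
    | tmul z w =>
      simp [mulT3_tmul', mulT_tmul', hexB_tmul', hone, hone']

private lemma L2 (hone' : ∀ a, mul a one = alpha a) (S : H ⊗[k] H) (W : H ⊗[k] (H ⊗[k] H)) :
    mulT3 mul W (one ⊗ₜ[k] S)
      = TensorProduct.map alpha.toLinearMap ((mulT mul).flip S) W := by
  induction W using TensorProduct.induction_on with
  | zero => simp
  | add u v ihu ihv => simp only [tmul_add, add_tmul, map_add, LinearMap.add_apply, TensorProduct.map_add_left, TensorProduct.map_add_right, ihu, ihv]
  | tmul a b => simp [mulT3_tmul', hone', LinearMap.flip_apply]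

private lemma L3 (hone : ∀ a, mul one a = alpha a) (hone' : ∀ a, mul a one = alpha a)
    (X Y : H ⊗[k] H) :
    mulT3 mul
        (TensorProduct.map LinearMap.id (TensorProduct.comm k H H).toLinearMap
          (TensorProduct.assoc k H H H (X ⊗ₜ[k] one)))
        (TensorProduct.assoc k H H H (Y ⊗ₜ[k] one))
      = TensorProduct.map LinearMap.id
          (TensorProduct.map alpha.toLinearMap alpha.toLinearMap)
          (hexB mul (X ⊗ₜ[k] Y)) := by
  induction X using TensorProduct.induction_on with
  | zero => simp
  | add u v ihu ihv => simp only [tmul_add, add_tmul, map_add, LinearMap.add_apply, TensorProduct.map_add_left, TensorProduct.map_add_right, ihu, ihv]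
  | tmul x y =>
    induction Y using TensorProduct.induction_on with
    | zero => simp
    | add u v ihu ihv => simp only [tmul_add, add_tmul, map_add, LinearMap.add_apply, TensorProduct.map_add_left, TensorProduct.map_add_right, ihu, ihv]
    | tmul z w =>
      simp [mulT3_tmul', mulT_tmul', hexB_tmul', hone, hone']

private lemma L4 (hone : ∀ a, mul one a = alpha a) (S : H ⊗[k] H) (W : H ⊗[k] (H ⊗[k] H)) :
    mulT3 mul (one ⊗ₜ[k] S) W
      = TensorProduct.map alpha.toLinearMap (mulT mul S) W := by
  induction W using TensorProduct.induction_on with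
  | zero => simp
  | add u v ihu ihv => simp only [tmul_add, add_tmul, map_add, LinearMap.add_apply, TensorProduct.map_add_left, TensorProduct.map_add_right, ihu, ihv]
  | tmul a b => simp [mulT3_tmul', hone]

private lemma L7 (hone : ∀ a, mul one a = alpha a) (hone' : ∀ a, mul a one = alpha a)
    (X Y : H ⊗[k] H) :
    mulT3 mul
        (TensorProduct.map LinearMap.id (TensorProduct.comm k H H).toLinearMap
          (TensorProduct.assoc k H H H (X ⊗ₜ[k] one)))
        (one ⊗ₜ[k] Y)
      = TensorProduct.map alpha.toLinearMap
          (TensorProduct.map alpha.toLinearMap LinearMap.id)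
          (hexA mul (X ⊗ₜ[k] Y)) := by
  induction X using TensorProduct.induction_on with
  | zero => simp
  | add u v ihu ihv => simp only [tmul_add, add_tmul, map_add, LinearMap.add_apply, TensorProduct.map_add_left, TensorProduct.map_add_right, ihu, ihv]
  | tmul x y =>
    induction Y using TensorProduct.induction_on with
    | zero => simp
    | add u v ihu ihv => simp only [tmul_add, add_tmul, map_add, LinearMap.add_apply, TensorProduct.map_add_left, TensorProduct.map_add_right, ihu, ihv]
    | tmul z w =>
      simp [mulT3_tmul', mulT_tmul', hexA_tmul', hone, hone']

private lemma L8 (W : (H ⊗[k] H) ⊗[k] H) :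
    TensorProduct.map alpha.toLinearMap
        (TensorProduct.map alpha.toLinearMap LinearMap.id)
        (TensorProduct.assoc k H H H W)
      = TensorProduct.assoc k H H H
          (TensorProduct.map (TensorProduct.map alpha.toLinearMap alpha.toLinearMap)
            LinearMap.id W) := by
  induction W using TensorProduct.induction_on with
  | zero => simp
  | add u v ihu ihv => simp only [tmul_add, add_tmul, map_add, LinearMap.add_apply, TensorProduct.map_add_left, TensorProduct.map_add_right, ihu, ihv]
  | tmul p v =>
    induction p using TensorProduct.induction_on with
    | zero => simp
    | add u' v' ihu ihv => simp only [tmul_add, add_tmul, map_add, LinearMap.add_apply, TensorProduct.map_add_left, TensorProduct.map_add_right, ihu, ihv]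
    | tmul a b => simp

private lemma L9 (hone : ∀ a, mul one a = alpha a)
    (X : H ⊗[k] H) (W : (H ⊗[k] H) ⊗[k] H) :
    mulT3 mul (TensorProduct.assoc k H H H (X ⊗ₜ[k] one))
        (TensorProduct.assoc k H H H W)
      = TensorProduct.assoc k H H H
          (TensorProduct.map (mulT mul X) alpha.toLinearMap W) := by
  induction X using TensorProduct.induction_on with
  | zero => simp
  | add u v ihu ihv => simp only [tmul_add, add_tmul, map_add, LinearMap.add_apply, TensorProduct.map_add_left, TensorProduct.map_add_right, ihu, ihv]
  | tmul x y =>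
    induction W using TensorProduct.induction_on with
    | zero => simp
    | add u v ihu ihv => simp only [tmul_add, add_tmul, map_add, LinearMap.add_apply, TensorProduct.map_add_left, TensorProduct.map_add_right, ihu, ihv]
    | tmul p v =>
      induction p using TensorProduct.induction_on with
      | zero => simp
      | add u' v' ihu ihv => simp only [tmul_add, add_tmul, map_add, LinearMap.add_apply, TensorProduct.map_add_left, TensorProduct.map_add_right, ihu, ihv]
      | tmul z w => simp [mulT3_tmul', mulT_tmul', hone]

private lemma L10 (hone : ∀ a, mul one a = alpha a) (hone' : ∀ a, mul a one = alpha a)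
    (X Y : H ⊗[k] H) :
    mulT3 mul (one ⊗ₜ[k] X)
        (TensorProduct.map LinearMap.id (TensorProduct.comm k H H).toLinearMap
          (TensorProduct.assoc k H H H (Y ⊗ₜ[k] one)))
      = TensorProduct.assoc k H H H
          (TensorProduct.map
            (TensorProduct.map alpha.toLinearMap alpha.toLinearMap ∘ₗ
              (TensorProduct.comm k H H).toLinearMap)
            LinearMap.id
            ((TensorProduct.assoc k H H H).symm (hexA mul (X ⊗ₜ[k] Y)))) := by
  induction X using TensorProduct.induction_on with
  | zero => simp
  | add u v ihu ihv => simp only [tmul_add, add_tmul, map_add, LinearMap.add_apply, TensorProduct.map_add_left, TensorProduct.map_add_right, ihu, ihv]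
  | tmul z w =>
    induction Y using TensorProduct.induction_on with
    | zero => simp
    | add u v ihu ihv => simp only [tmul_add, add_tmul, map_add, LinearMap.add_apply, TensorProduct.map_add_left, TensorProduct.map_add_right, ihu, ihv]
    | tmul x y =>
      simp [mulT3_tmul', mulT_tmul', hexA_tmul', hone, hone']

private lemma L11 (hone' : ∀ a, mul a one = alpha a)
    (X : H ⊗[k] H) (W : (H ⊗[k] H) ⊗[k] H) :
    mulT3 mul (TensorProduct.assoc k H H H W)
        (TensorProduct.assoc k H H H (X ⊗ₜ[k] one))
      = TensorProduct.assoc k H H H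
          (TensorProduct.map ((mulT mul).flip X) alpha.toLinearMap W) := by
  induction X using TensorProduct.induction_on with
  | zero => simp
  | add u v ihu ihv => simp only [tmul_add, add_tmul, map_add, LinearMap.add_apply, TensorProduct.map_add_left, TensorProduct.map_add_right, ihu, ihv]
  | tmul x y =>
    induction W using TensorProduct.induction_on with
    | zero => simp
    | add u v ihu ihv => simp only [tmul_add, add_tmul, map_add, LinearMap.add_apply, TensorProduct.map_add_left, TensorProduct.map_add_right, ihu, ihv]
    | tmul p v =>
      induction p using TensorProduct.induction_on with
      | zero => simp
      | add u' v' ihu ihv => simp only [tmul_add, add_tmul, map_add, LinearMap.add_apply, TensorProduct.map_add_left, TensorProduct.map_add_right, ihu, ihv]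
      | tmul z w => simp [mulT3_tmul', mulT_tmul', hone', LinearMap.flip_apply]

end YBEAux

/-- An `R`-matrix of a quasitriangular monoidal Hom-bialgebra
satisfies the quantum Hom-Yang-Baxter equations
`(R₁₂R₁₃)R₂₃ = R₂₃(R₁₃R₁₂)` and `R₁₂(R₁₃R₂₃) = (R₂₃R₁₃)R₁₂`. -/
theorem quantum_hom_yang_baxter
    {k H : Type*} [CommRing k] [AddCommGroup H] [Module k H]
    (mul : H →ₗ[k] H →ₗ[k] H) (one : H) (alpha : H ≃ₗ[k] H)
    (comul : H →ₗ[k] H ⊗[k] H) (counit : H →ₗ[k] k) (R Rinv : H ⊗[k] H)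
    (hH : IsMonHomBialgebra mul one alpha comul counit)
    (hinv₁ : mulT mul R Rinv = one ⊗ₜ[k] one)
    (hinv₂ : mulT mul Rinv R = one ⊗ₜ[k] one)
    (hR : IsRMatrix mul alpha comul R) :
    (mulT3 mul
        (mulT3 mul (TensorProduct.assoc k H H H (R ⊗ₜ[k] one))
          (TensorProduct.map LinearMap.id (TensorProduct.comm k H H).toLinearMap
            (TensorProduct.assoc k H H H (R ⊗ₜ[k] one))))
        (one ⊗ₜ[k] R)
      = mulT3 mul (one ⊗ₜ[k] R)
          (mulT3 mul
            (TensorProduct.map LinearMap.id (TensorProduct.comm k H H).toLinearMap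
              (TensorProduct.assoc k H H H (R ⊗ₜ[k] one)))
            (TensorProduct.assoc k H H H (R ⊗ₜ[k] one))))
    ∧ (mulT3 mul (TensorProduct.assoc k H H H (R ⊗ₜ[k] one))
        (mulT3 mul
          (TensorProduct.map LinearMap.id (TensorProduct.comm k H H).toLinearMap
            (TensorProduct.assoc k H H H (R ⊗ₜ[k] one)))
          (one ⊗ₜ[k] R))
      = mulT3 mul
          (mulT3 mul (one ⊗ₜ[k] R)
            (TensorProduct.map LinearMap.id (TensorProduct.comm k H H).toLinearMap
              (TensorProduct.assoc k H H H (R ⊗ₜ[k] one))))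
          (TensorProduct.assoc k H H H (R ⊗ₜ[k] one))) := by
  have hone := hH.one_mul'
  have hone' := hH.mul_one'
  constructor
  · rw [L1 mul hone hone' R R, ← hR.Q4, L2 mul hone' R,
        L3 mul hone hone' R R, ← hR.Q4, L4 mul hone R]
    simp only [map_map_apply, LinearMap.comp_id, LinearMap.id_comp]
    have key : (mulT mul).flip R ∘ₗ
          ((TensorProduct.comm k H H).toLinearMap ∘ₗ
            TensorProduct.map alpha.toLinearMap alpha.toLinearMap) ∘ₗ comul
        = mulT mul R ∘ₗ TensorProduct.map alpha.toLinearMap alpha.toLinearMap ∘ₗ comul := by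
      refine LinearMap.ext fun c => ?_
      simp only [LinearMap.comp_apply, LinearMap.flip_apply, LinearEquiv.coe_coe,
        ← hH.comul_alpha]
      exact (hR.Q2 (alpha c)).symm
    rw [key]
  · rw [L7 mul hone hone' R R, ← hR.Q3, L8, map_map_apply, L9 mul hone R,
        L10 mul hone hone' R R, ← hR.Q3, LinearEquiv.symm_apply_apply, map_map_apply,
        L11 mul hone' R]
    simp only [map_map_apply, LinearMap.comp_id, LinearMap.id_comp]
    have key : (mulT mul).flip R ∘ₗ
          (TensorProduct.map alpha.toLinearMap alpha.toLinearMap ∘ₗ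
            (TensorProduct.comm k H H).toLinearMap) ∘ₗ comul
        = mulT mul R ∘ₗ TensorProduct.map alpha.toLinearMap alpha.toLinearMap ∘ₗ comul := by
      refine LinearMap.ext fun c => ?_
      simp only [LinearMap.comp_apply, LinearMap.flip_apply, LinearEquiv.coe_coe,
        comm_map_apply, ← hH.comul_alpha]
      exact (hR.Q2 (alpha c)).symm
    rw [key]


end HomTwist
end

section
/- Let (H, α) be a monoidal Hom-bialgebra with Drinfeld twist σ and inverse ϱ, and define Δᵠ(x) = (σΔ(x))ϱ. Then Hᵠ = (H, α, m, η, Δᵠ, ε) is a Hom-bialgebra: (H, α, Δᵠ, ε) satisfies Hom-coassociativity α(x₍₁₎)⊗Δᵠ(x₍₂₎) = Δᵠ(x₍₁₎)⊗α(x₍₂₎) and Hom-counitality ε(x₍₁₎)x₍₂₎ = x₍₁₎ε(x₍₂₎) = α(x), where Δᵠ(x) = x₍₁₎⊗x₍₂₎, and Δᵠ, ε are Hom-algebra maps. -/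
open TensorProduct

namespace HomTwist
open TensorProduct

section Aux
variable {k H : Type*} [CommRing k] [AddCommGroup H] [Module k H]
  (mul : H →ₗ[k] H →ₗ[k] H) (one : H) (alpha : H ≃ₗ[k] H)
  (comul : H →ₗ[k] H ⊗[k] H) (counit : H →ₗ[k] k)

theorem alpha_symm_mul (hH : IsMonHomBialgebra mul one alpha comul counit) :
    ∀ x y, alpha.symm (mul x y) = mul (alpha.symm x) (alpha.symm y) := by
  intro x y
  apply alpha.injective
  rw [hH.alpha_mul, alpha.apply_symm_apply, alpha.apply_symm_apply, alpha.apply_symm_apply]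

/-- the untwisted associative ring structure -/
@[reducible]
def starRing (hH : IsMonHomBialgebra mul one alpha comul counit) : Ring H where
  __ := (inferInstance : AddCommGroup H)
  mul a b := alpha.symm (mul a b)
  one := one
  left_distrib a b c := by show alpha.symm _ = alpha.symm _ + alpha.symm _; simp
  right_distrib a b c := by show alpha.symm _ = alpha.symm _ + alpha.symm _; simp
  zero_mul a := by show alpha.symm _ = 0; simp
  mul_zero a := by show alpha.symm _ = 0; simp
  mul_assoc a b c := by
    have hinv := alpha_symm_mul mul one alpha comul counit hH
    show alpha.symm (mul (alpha.symm (mul a b)) c) = alpha.symm (mul a (alpha.symm (mul b c)))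
    congr 1
    calc mul (alpha.symm (mul a b)) c
        = mul (mul (alpha.symm a) (alpha.symm b)) (alpha (alpha.symm c)) := by
          rw [hinv, alpha.apply_symm_apply]
      _ = mul (alpha (alpha.symm a)) (mul (alpha.symm b) (alpha.symm c)) :=
          (hH.hom_assoc _ _ _).symm
      _ = mul a (alpha.symm (mul b c)) := by rw [alpha.apply_symm_apply, ← hinv]
  one_mul a := by show alpha.symm (mul one a) = a; rw [hH.one_mul', alpha.symm_apply_apply]
  mul_one a := by show alpha.symm (mul a one) = a; rw [hH.mul_one', alpha.symm_apply_apply]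

def starAlgebra (hH : IsMonHomBialgebra mul one alpha comul counit) :
    letI := starRing mul one alpha comul counit hH
    Algebra k H :=
  letI := starRing mul one alpha comul counit hH
  Algebra.ofModule (fun r x y => by show alpha.symm (mul (r • x) y) = r • alpha.symm _; simp)
    (fun r x y => by show alpha.symm (mul x (r • y)) = r • alpha.symm _; simp)

end Aux

section MoreDefs
variable {k : Type*} [CommRing k] {H : Type*} [AddCommGroup H] [Module k H]

/-- `alpha ⊗ alpha` as a linear map. -/
noncomputable def BL (alpha : H ≃ₗ[k] H) : H ⊗[k] H →ₗ[k] H ⊗[k] H :=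
  TensorProduct.map alpha.toLinearMap alpha.toLinearMap

@[simp] lemma BL_tmul (alpha : H ≃ₗ[k] H) (a b : H) :
    BL alpha (a ⊗ₜ[k] b) = alpha a ⊗ₜ[k] alpha b := rfl

lemma BL_eq (alpha : H ≃ₗ[k] H) :
    BL alpha = TensorProduct.map alpha.toLinearMap alpha.toLinearMap := rfl

end MoreDefs

section StarAux
variable {k H : Type*} [CommRing k] [Ring H] [Algebra k H]

set_option maxHeartbeats 1000000 in
theorem aux_main
    (mul : H →ₗ[k] H →ₗ[k] H) (one : H) (alpha : H ≃ₗ[k] H)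
    (comul : H →ₗ[k] H ⊗[k] H) (counit : H →ₗ[k] k) (σ ϱ : H ⊗[k] H)
    (hH : IsMonHomBialgebra mul one alpha comul counit)
    (hσ : IsTwist mul one alpha comul counit σ ϱ)
    (hmulstar : ∀ a b : H, a * b = alpha.symm (mul a b))
    (honestar : (1 : H) = one) :
    IsHomBialgebra mul one alpha (twistComul mul comul σ ϱ) counit := by
  have hmul' : ∀ a b : H, mul a b = alpha (a * b) := by
    intro a b; rw [hmulstar, alpha.apply_symm_apply]
  have hαmul : ∀ a b : H, alpha (a * b) = alpha a * alpha b := by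
    intro a b
    rw [hmulstar, hmulstar, ← hH.alpha_mul]
    simp
  have hα1 : alpha (1 : H) = 1 := by rw [honestar]; exact hH.alpha_one
  have hsone : alpha.symm (1 : H) = 1 := by
    conv_lhs => rw [← hα1]; exact alpha.symm_apply_apply 1
  -- mulT in terms of the star product
  have hmulT : ∀ X Y : H ⊗[k] H, mulT mul X Y = BL alpha (X * Y) := by
    intro X Y
    induction X using TensorProduct.induction_on with
    | zero => simp
    | tmul a b =>
      induction Y using TensorProduct.induction_on with
      | zero => simp
      | tmul c d =>
        rw [Algebra.TensorProduct.tmul_mul_tmul, BL_tmul]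
        simp [mulT, pairMap, TensorProduct.mapBilinear, hmul']
      | add u v hu hv => rw [mul_add, map_add, map_add, hu, hv]
    | add u v hu hv => rw [add_mul, map_add, LinearMap.add_apply, hu, hv, map_add]
  -- beta is multiplicative
  have hβmul : ∀ X Y : H ⊗[k] H, BL alpha (X * Y) = BL alpha X * BL alpha Y := by
    intro X Y
    induction X using TensorProduct.induction_on with
    | zero => simp
    | tmul a b =>
      induction Y using TensorProduct.induction_on with
      | zero => simp
      | tmul c d =>
        rw [Algebra.TensorProduct.tmul_mul_tmul, BL_tmul, BL_tmul, BL_tmul,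
          Algebra.TensorProduct.tmul_mul_tmul, hαmul, hαmul]
      | add u v hu hv => rw [mul_add, map_add, hu, hv, map_add, mul_add]
    | add u v hu hv => rw [add_mul, map_add, hu, hv, map_add, add_mul]
  have hone2 : (1 : H ⊗[k] H) = one ⊗ₜ[k] one := by
    rw [Algebra.TensorProduct.one_def, honestar]
  have hβ1 : BL alpha (1 : H ⊗[k] H) = 1 := by
    rw [Algebra.TensorProduct.one_def, BL_tmul, hα1]
  have hβσ : BL alpha σ = σ := hσ.T1
  have hβinv : ∀ z : H ⊗[k] H, BL alpha.symm (BL alpha z) = z := by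
    intro z
    induction z using TensorProduct.induction_on with
    | zero => simp
    | tmul a b => simp
    | add u v hu hv => simp only [map_add, hu, hv]
  have hσϱ : σ * ϱ = 1 := by
    have h1 : BL alpha (σ * ϱ) = one ⊗ₜ[k] one := by rw [← hmulT]; exact hσ.mul_inv
    have h2 := hβinv (σ * ϱ)
    rw [h1, ← hone2, ← hβ1, hβinv] at h2
    exact h2.symm
  have hϱσ : ϱ * σ = 1 := by
    have h1 : BL alpha (ϱ * σ) = one ⊗ₜ[k] one := by rw [← hmulT]; exact hσ.inv_mul
    have h2 := hβinv (ϱ * σ)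
    rw [h1, ← hone2, ← hβ1, hβinv] at h2
    exact h2.symm
  have hβϱ : BL alpha ϱ = ϱ := by
    have h1 : BL alpha ϱ * σ = 1 := by rw [← hβσ, ← hβmul, hϱσ, hβ1]
    exact left_inv_eq_right_inv h1 hσϱ
  -- comultiplication facts
  have hcomulα : ∀ c, comul (alpha c) = BL alpha (comul c) := hH.comul_alpha
  have hDmul : ∀ a b : H, comul (alpha (a * b)) = comul (alpha a) * comul (alpha b) := by
    intro a b
    rw [hmulstar, alpha.apply_symm_apply, hH.comul_mul, hmulT, hβmul,
      ← hcomulα, ← hcomulα]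
  -- D as an AlgHom
  let Da : H →ₐ[k] H ⊗[k] H := AlgHom.ofLinearMap (comul ∘ₗ alpha.toLinearMap)
    (by show comul (alpha (1:H)) = 1
        rw [hα1, honestar, hH.comul_one, hone2])
    (fun a b => hDmul a b)
  have hDa : ∀ x, Da x = comul (alpha x) := fun x => rfl
  have hDaβ : ∀ x, Da x = BL alpha (comul x) := by
    intro x; rw [hDa, hcomulα]
  have hDaα : ∀ x, Da (alpha x) = BL alpha (Da x) := by
    intro x; rw [hDa, hDa, hcomulα (alpha x), ← hDaβ, hDa, hcomulα]
  -- counit as an AlgHom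
  have hεs : ∀ x, counit (alpha.symm x) = counit x := by
    intro x; conv_rhs => rw [← alpha.apply_symm_apply x, hH.counit_alpha]
  let εa : H →ₐ[k] k := AlgHom.ofLinearMap counit
    (by show counit (1:H) = 1; rw [honestar, hH.counit_one])
    (by intro a b
        rw [hmulstar]
        show counit (alpha.symm (mul a b)) = counit a * counit b
        rw [hεs, hH.counit_mul])
  let assocA := Algebra.TensorProduct.assoc k k k H H H
  have hassoc : ∀ u : (H ⊗[k] H) ⊗[k] H, assocA u = TensorProduct.assoc k H H H u :=
    fun _ => rfl
  let idDa : H ⊗[k] H →ₐ[k] H ⊗[k] (H ⊗[k] H) :=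
    Algebra.TensorProduct.map (AlgHom.id k H) Da
  let Daid : H ⊗[k] H →ₐ[k] (H ⊗[k] H) ⊗[k] H :=
    Algebra.TensorProduct.map Da (AlgHom.id k H)
  have hidDa : ∀ (a b : H), idDa (a ⊗ₜ[k] b) = a ⊗ₜ[k] Da b := fun a b => rfl
  have hDaid : ∀ (a b : H), Daid (a ⊗ₜ[k] b) = Da a ⊗ₜ[k] b := fun a b => rfl
  -- squared maps
  let α2 := alpha.trans alpha
  have hβ2 : ∀ z : H ⊗[k] H, BL alpha (BL alpha z) = BL α2 z := by
    intro z
    induction z using TensorProduct.induction_on with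
    | zero => simp
    | tmul a b => simp [α2]
    | add u v hu hv => simp only [map_add, hu, hv]
  -- classical coassociativity of Da
  have P1 : ∀ w : H ⊗[k] H, idDa (BL alpha w)
      = TensorProduct.map α2.toLinearMap (BL α2)
          (TensorProduct.map alpha.symm.toLinearMap comul w) := by
    intro w
    induction w using TensorProduct.induction_on with
    | zero => simp
    | tmul a b =>
      rw [BL_tmul, TensorProduct.map_tmul, TensorProduct.map_tmul, hidDa, hDaα, hDaβ, hβ2]
      congr 1
      simp [α2]
    | add u v hu hv => simp only [map_add, hu, hv]
  have P2 : ∀ w : H ⊗[k] H, Daid (BL alpha w)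
      = TensorProduct.map (BL α2) α2.toLinearMap
          (TensorProduct.map comul alpha.symm.toLinearMap w) := by
    intro w
    induction w using TensorProduct.induction_on with
    | zero => simp
    | tmul a b =>
      rw [BL_tmul, TensorProduct.map_tmul, TensorProduct.map_tmul, hDaid, hDaα, hDaβ, hβ2]
      congr 1
      simp [α2]
    | add u v hu hv => simp only [map_add, hu, hv]
  have P3 : ∀ u : (H ⊗[k] H) ⊗[k] H,
      TensorProduct.map α2.toLinearMap (BL α2) (TensorProduct.assoc k H H H u)
        = TensorProduct.assoc k H H H (TensorProduct.map (BL α2) α2.toLinearMap u) := by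
    intro u
    induction u using TensorProduct.induction_on with
    | zero => simp
    | tmul X c =>
      induction X using TensorProduct.induction_on with
      | zero => simp
      | tmul a b => rfl
      | add u v hu hv =>
        rw [TensorProduct.add_tmul, map_add, map_add, hu, hv, map_add, map_add]
    | add u v hu hv => simp only [map_add, hu, hv]
  have hDaCo : ∀ x, idDa (Da x) = assocA (Daid (Da x)) := by
    intro x
    rw [hassoc, hDaβ x, P1, P2, hH.hom_coassoc x, P3]
  -- derivation of the classical cocycle condition from T3
  have cA : ∀ W : H ⊗[k] (H ⊗[k] H),
      TensorProduct.map LinearMap.id (mulT mul σ) W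
        = TensorProduct.map LinearMap.id (BL alpha) (((1:H) ⊗ₜ[k] σ) * W) := by
    intro W
    induction W using TensorProduct.induction_on with
    | zero => simp
    | tmul a Y =>
      rw [TensorProduct.map_tmul, Algebra.TensorProduct.tmul_mul_tmul, one_mul,
        TensorProduct.map_tmul, hmulT]
    | add u v hu hv => rw [map_add, mul_add, map_add, hu, hv]
  have cB : ∀ W : (H ⊗[k] H) ⊗[k] H,
      TensorProduct.map (mulT mul σ) LinearMap.id W
        = TensorProduct.map (BL alpha) LinearMap.id ((σ ⊗ₜ[k] (1:H)) * W) := by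
    intro W
    induction W using TensorProduct.induction_on with
    | zero => simp
    | tmul Y c =>
      rw [TensorProduct.map_tmul, Algebra.TensorProduct.tmul_mul_tmul, one_mul,
        TensorProduct.map_tmul, hmulT]
    | add u v hu hv => rw [map_add, mul_add, map_add, hu, hv]
  have cD : ∀ z : H ⊗[k] H,
      ((1:H) ⊗ₜ[k] σ) * idDa z
        = TensorProduct.map LinearMap.id (BL alpha)
            (((1:H) ⊗ₜ[k] σ) * TensorProduct.map LinearMap.id comul z) := by
    intro z
    induction z using TensorProduct.induction_on with
    | zero => simp
    | tmul a b =>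
      have h : σ * Da b = BL alpha (σ * comul b) := by
        rw [hβmul, hβσ, ← hDaβ]
      rw [hidDa, Algebra.TensorProduct.tmul_mul_tmul, one_mul,
        TensorProduct.map_tmul, Algebra.TensorProduct.tmul_mul_tmul, one_mul,
        TensorProduct.map_tmul, h]
      simp only [LinearMap.id_coe, id_eq]
    | add u v hu hv => simp only [map_add, mul_add, hu, hv]
  have cE : ∀ z : H ⊗[k] H,
      (σ ⊗ₜ[k] (1:H)) * Daid z
        = TensorProduct.map (BL alpha) LinearMap.id
            ((σ ⊗ₜ[k] (1:H)) * TensorProduct.map comul LinearMap.id z) := by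
    intro z
    induction z using TensorProduct.induction_on with
    | zero => simp
    | tmul a b =>
      have h : σ * Da a = BL alpha (σ * comul a) := by
        rw [hβmul, hβσ, ← hDaβ]
      rw [hDaid, Algebra.TensorProduct.tmul_mul_tmul, one_mul,
        TensorProduct.map_tmul, Algebra.TensorProduct.tmul_mul_tmul, one_mul,
        TensorProduct.map_tmul, h]
      simp only [LinearMap.id_coe, id_eq]
    | add u v hu hv => simp only [map_add, mul_add, hu, hv]
  have cocycle : ((1:H) ⊗ₜ[k] σ) * idDa σ = assocA ((σ ⊗ₜ[k] (1:H)) * Daid σ) := by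
    rw [cD σ, ← cA, hσ.T3, cB, ← cE, hassoc]
  -- the classically twisted coproduct
  let DcL : H →ₗ[k] H ⊗[k] H :=
    LinearMap.mulRight k ϱ ∘ₗ LinearMap.mulLeft k σ ∘ₗ Da.toLinearMap
  have hDcL : ∀ x, DcL x = σ * Da x * ϱ := fun x => rfl
  have step1 : ∀ Z : H ⊗[k] H,
      TensorProduct.map LinearMap.id DcL Z
        = ((1:H) ⊗ₜ[k] σ) * idDa Z * ((1:H) ⊗ₜ[k] ϱ) := by
    intro Z
    induction Z using TensorProduct.induction_on with
    | zero => simp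
    | tmul a b =>
      rw [TensorProduct.map_tmul, hidDa, Algebra.TensorProduct.tmul_mul_tmul,
        Algebra.TensorProduct.tmul_mul_tmul, one_mul, mul_one, hDcL]
      simp only [LinearMap.id_coe, id_eq]
    | add u v hu hv => simp only [map_add, mul_add, add_mul, hu, hv]
  have step2 : ∀ Z : H ⊗[k] H,
      TensorProduct.map DcL LinearMap.id Z
        = (σ ⊗ₜ[k] (1:H)) * Daid Z * (ϱ ⊗ₜ[k] (1:H)) := by
    intro Z
    induction Z using TensorProduct.induction_on with
    | zero => simp
    | tmul a b =>
      rw [TensorProduct.map_tmul, hDaid, Algebra.TensorProduct.tmul_mul_tmul,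
        Algebra.TensorProduct.tmul_mul_tmul, one_mul, mul_one, hDcL]
      simp only [LinearMap.id_coe, id_eq]
    | add u v hu hv => simp only [map_add, mul_add, add_mul, hu, hv]
  have invΦ : (((1:H) ⊗ₜ[k] σ) * idDa σ) * (idDa ϱ * ((1:H) ⊗ₜ[k] ϱ)) = 1 := by
    have h1 : idDa σ * idDa ϱ = 1 := by rw [← map_mul, hσϱ, map_one]
    calc (((1:H) ⊗ₜ[k] σ) * idDa σ) * (idDa ϱ * ((1:H) ⊗ₜ[k] ϱ))
        = ((1:H) ⊗ₜ[k] σ) * ((idDa σ * idDa ϱ) * ((1:H) ⊗ₜ[k] ϱ)) := by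
          rw [mul_assoc, ← mul_assoc (idDa σ)]
      _ = ((1:H) ⊗ₜ[k] σ) * ((1:H) ⊗ₜ[k] ϱ) := by rw [h1, one_mul]
      _ = 1 := by
          rw [Algebra.TensorProduct.tmul_mul_tmul, one_mul, hσϱ,
            ← Algebra.TensorProduct.one_def]
  have invΨΦ : (assocA (Daid ϱ * (ϱ ⊗ₜ[k] (1:H)))) * (((1:H) ⊗ₜ[k] σ) * idDa σ) = 1 := by
    rw [cocycle, ← map_mul]
    have h2 : (ϱ ⊗ₜ[k] (1:H)) * (σ ⊗ₜ[k] (1:H)) = (1 : (H ⊗[k] H) ⊗[k] H) := by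
      rw [Algebra.TensorProduct.tmul_mul_tmul, one_mul, hϱσ,
        ← Algebra.TensorProduct.one_def]
    have h3 : (Daid ϱ * (ϱ ⊗ₜ[k] (1:H))) * ((σ ⊗ₜ[k] (1:H)) * Daid σ) = 1 := by
      rw [mul_assoc, ← mul_assoc (ϱ ⊗ₜ[k] (1:H)), h2, one_mul, ← map_mul, hϱσ, map_one]
    rw [h3, map_one]
  have hΨ : idDa ϱ * ((1:H) ⊗ₜ[k] ϱ) = assocA (Daid ϱ * (ϱ ⊗ₜ[k] (1:H))) :=
    (left_inv_eq_right_inv invΨΦ invΦ).symm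
  have hDcCo : ∀ x : H,
      TensorProduct.map LinearMap.id DcL (DcL x)
        = TensorProduct.assoc k H H H (TensorProduct.map DcL LinearMap.id (DcL x)) := by
    intro x
    rw [step1, step2, ← hassoc]
    have e1 : idDa (DcL x) = idDa σ * idDa (Da x) * idDa ϱ := by
      rw [hDcL, map_mul, map_mul]
    have e2 : Daid (DcL x) = Daid σ * Daid (Da x) * Daid ϱ := by
      rw [hDcL, map_mul, map_mul]
    rw [e1, e2]
    calc ((1:H) ⊗ₜ[k] σ) * (idDa σ * idDa (Da x) * idDa ϱ) * ((1:H) ⊗ₜ[k] ϱ)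
        = (((1:H) ⊗ₜ[k] σ) * idDa σ) * idDa (Da x) * (idDa ϱ * ((1:H) ⊗ₜ[k] ϱ)) := by
          simp only [mul_assoc]
      _ = (assocA ((σ ⊗ₜ[k] (1:H)) * Daid σ)) * assocA (Daid (Da x))
            * assocA (Daid ϱ * (ϱ ⊗ₜ[k] (1:H))) := by
          rw [← cocycle, ← hDaCo, ← hΨ]
      _ = assocA ((σ ⊗ₜ[k] (1:H)) * Daid σ * Daid (Da x) * (Daid ϱ * (ϱ ⊗ₜ[k] (1:H)))) := by
          rw [← map_mul, ← map_mul]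
      _ = assocA ((σ ⊗ₜ[k] (1:H)) * (Daid σ * Daid (Da x) * Daid ϱ) * (ϱ ⊗ₜ[k] (1:H))) := by
          congr 1
          simp only [mul_assoc]
  -- the Hom-twisted coproduct in terms of DcL
  have htc : ∀ x, twistComul mul comul σ ϱ x = BL alpha (DcL x) := by
    intro x
    show mulT mul (mulT mul σ (comul x)) ϱ = BL alpha (DcL x)
    have h : BL alpha (σ * comul x) = σ * Da x := by
      rw [hβmul, hβσ, ← hDaβ]
    rw [hmulT, hmulT, h, hDcL]
  have hDcα : ∀ x, DcL (alpha x) = BL alpha (DcL x) := by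
    intro x
    rw [hDcL, hDcL, hDaα, hβmul, hβmul, hβσ, hβϱ]
  have hTeq : twistComul mul comul σ ϱ = BL alpha ∘ₗ DcL :=
    LinearMap.ext fun x => htc x
  -- multiplicativity of DcL
  have key : ∀ u v : H ⊗[k] H, (σ * u * ϱ) * (σ * v * ϱ) = σ * (u * v) * ϱ := by
    intro u v
    calc (σ * u * ϱ) * (σ * v * ϱ) = σ * (u * ((ϱ * σ) * (v * ϱ))) := by
          simp only [mul_assoc]
      _ = σ * (u * v) * ϱ := by rw [hϱσ, one_mul]; simp only [mul_assoc]
  have hDcmul : ∀ a b : H, DcL (a * b) = DcL a * DcL b := by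
    intro a b
    rw [hDcL, hDcL, hDcL, map_mul, ← key]
  -- coassociativity transport lemmas
  have Lleft : ∀ z : H ⊗[k] H,
      TensorProduct.map alpha.toLinearMap (BL alpha ∘ₗ DcL) (BL alpha z)
        = TensorProduct.map α2.toLinearMap (BL α2)
            (TensorProduct.map LinearMap.id DcL z) := by
    intro z
    induction z using TensorProduct.induction_on with
    | zero => simp
    | tmul a b =>
      simp only [BL_tmul, TensorProduct.map_tmul, LinearMap.coe_comp,
        Function.comp_apply, LinearMap.id_coe, id_eq, LinearEquiv.coe_coe]
      rw [hDcα, hβ2]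
      rfl
    | add u v hu hv => simp only [map_add, hu, hv]
  have Lright : ∀ z : H ⊗[k] H,
      TensorProduct.map (BL alpha ∘ₗ DcL) alpha.toLinearMap (BL alpha z)
        = TensorProduct.map (BL α2) α2.toLinearMap
            (TensorProduct.map DcL LinearMap.id z) := by
    intro z
    induction z using TensorProduct.induction_on with
    | zero => simp
    | tmul a b =>
      simp only [BL_tmul, TensorProduct.map_tmul, LinearMap.coe_comp,
        Function.comp_apply, LinearMap.id_coe, id_eq, LinearEquiv.coe_coe]
      rw [hDcα, hβ2]
      rfl
    | add u v hu hv => simp only [map_add, hu, hv]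
  -- counit lemmas (left)
  have Emul : ∀ X Y : H ⊗[k] H,
      TensorProduct.lid k H (TensorProduct.map counit LinearMap.id (X * Y))
        = TensorProduct.lid k H (TensorProduct.map counit LinearMap.id X)
          * TensorProduct.lid k H (TensorProduct.map counit LinearMap.id Y) := by
    intro X Y
    induction X using TensorProduct.induction_on with
    | zero => simp
    | tmul a b =>
      induction Y using TensorProduct.induction_on with
      | zero => simp
      | tmul c d =>
        rw [Algebra.TensorProduct.tmul_mul_tmul]
        simp only [TensorProduct.map_tmul, TensorProduct.lid_tmul, LinearMap.id_coe, id_eq]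
        rw [hmulstar a c, hεs, hH.counit_mul]
        rw [Algebra.smul_mul_assoc, Algebra.mul_smul_comm, smul_smul]
      | add u v hu hv => simp only [mul_add, map_add, hu, hv]
    | add u v hu hv => simp only [add_mul, map_add, hu, hv, LinearMap.add_apply]
  have E1 : TensorProduct.lid k H (TensorProduct.map counit LinearMap.id (1 : H ⊗[k] H)) = 1 := by
    rw [Algebra.TensorProduct.one_def]
    simp only [TensorProduct.map_tmul, TensorProduct.lid_tmul, LinearMap.id_coe, id_eq]
    rw [honestar, hH.counit_one, one_smul]
  have Eσ : TensorProduct.lid k H (TensorProduct.map counit LinearMap.id σ) = 1 := by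
    rw [hσ.T2l, honestar]
  have ED : ∀ x, TensorProduct.lid k H (TensorProduct.map counit LinearMap.id (Da x)) = x := by
    intro x
    rw [hDa, hH.counit_id (alpha x), alpha.symm_apply_apply]
  have Eϱ : TensorProduct.lid k H (TensorProduct.map counit LinearMap.id ϱ) = 1 := by
    have h := Emul σ ϱ
    rw [hσϱ, E1, Eσ, one_mul] at h
    exact h.symm
  have Eβ : ∀ w : H ⊗[k] H,
      TensorProduct.lid k H (TensorProduct.map counit LinearMap.id (BL alpha w))
        = alpha (TensorProduct.lid k H (TensorProduct.map counit LinearMap.id w)) := by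
    intro w
    induction w using TensorProduct.induction_on with
    | zero => simp
    | tmul a b =>
      simp only [BL_tmul, TensorProduct.map_tmul, TensorProduct.lid_tmul,
        LinearMap.id_coe, id_eq, hH.counit_alpha, map_smul]
    | add u v hu hv => simp only [map_add, hu, hv]
  -- counit lemmas (right)
  have E'mul : ∀ X Y : H ⊗[k] H,
      TensorProduct.rid k H (TensorProduct.map LinearMap.id counit (X * Y))
        = TensorProduct.rid k H (TensorProduct.map LinearMap.id counit X)
          * TensorProduct.rid k H (TensorProduct.map LinearMap.id counit Y) := by
    intro X Y
    induction X using TensorProduct.induction_on with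
    | zero => simp
    | tmul a b =>
      induction Y using TensorProduct.induction_on with
      | zero => simp
      | tmul c d =>
        rw [Algebra.TensorProduct.tmul_mul_tmul]
        simp only [TensorProduct.map_tmul, TensorProduct.rid_tmul, LinearMap.id_coe, id_eq]
        rw [hmulstar b d, hεs, hH.counit_mul]
        rw [Algebra.smul_mul_assoc, Algebra.mul_smul_comm, smul_smul, mul_comm (counit b)]
      | add u v hu hv => simp only [mul_add, map_add, hu, hv]
    | add u v hu hv => simp only [add_mul, map_add, hu, hv, LinearMap.add_apply]
  have E'1 : TensorProduct.rid k H (TensorProduct.map LinearMap.id counit (1 : H ⊗[k] H)) = 1 := by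
    rw [Algebra.TensorProduct.one_def]
    simp only [TensorProduct.map_tmul, TensorProduct.rid_tmul, LinearMap.id_coe, id_eq]
    rw [honestar, hH.counit_one, one_smul]
  have E'σ : TensorProduct.rid k H (TensorProduct.map LinearMap.id counit σ) = 1 := by
    rw [hσ.T2r, honestar]
  have E'D : ∀ x, TensorProduct.rid k H (TensorProduct.map LinearMap.id counit (Da x)) = x := by
    intro x
    rw [hDa, hH.id_counit (alpha x), alpha.symm_apply_apply]
  have E'ϱ : TensorProduct.rid k H (TensorProduct.map LinearMap.id counit ϱ) = 1 := by
    have h := E'mul σ ϱ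
    rw [hσϱ, E'1, E'σ, one_mul] at h
    exact h.symm
  have E'β : ∀ w : H ⊗[k] H,
      TensorProduct.rid k H (TensorProduct.map LinearMap.id counit (BL alpha w))
        = alpha (TensorProduct.rid k H (TensorProduct.map LinearMap.id counit w)) := by
    intro w
    induction w using TensorProduct.induction_on with
    | zero => simp
    | tmul a b =>
      simp only [BL_tmul, TensorProduct.map_tmul, TensorProduct.rid_tmul,
        LinearMap.id_coe, id_eq, hH.counit_alpha, map_smul]
    | add u v hu hv => simp only [map_add, hu, hv]
  -- assemble the structure
  refine ⟨hH.alpha_mul, hH.hom_assoc, hH.alpha_one, hH.one_mul', hH.mul_one',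
    ?_, ?_, hH.counit_alpha, ?_, ?_, ?_, ?_, hH.counit_mul, hH.counit_one⟩
  · -- comul_alpha
    intro c
    rw [← BL_eq, htc, htc, hDcα]
  · -- hom_coassoc
    intro c
    rw [hTeq]
    have hc : (BL alpha ∘ₗ DcL) c = BL alpha (DcL c) := rfl
    rw [hc, Lleft, hDcCo, P3, ← Lright]
  · -- counit_id
    intro c
    rw [htc, Eβ, hDcL, Emul, Emul, Eσ, ED, Eϱ, one_mul, mul_one]
  · -- id_counit
    intro c
    rw [htc, E'β, hDcL, E'mul, E'mul, E'σ, E'D, E'ϱ, one_mul, mul_one]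
  · -- comul_mul
    intro a b
    have l1 : twistComul mul comul σ ϱ ((mul a) b)
        = BL alpha (BL alpha (DcL a * DcL b)) := by
      rw [hmul', htc, hDcα, hDcmul]
    have l2 : mulT mul (twistComul mul comul σ ϱ a) (twistComul mul comul σ ϱ b)
        = BL alpha (BL alpha (DcL a * DcL b)) := by
      rw [htc, htc, hmulT, ← hβmul]
    rw [l1, l2]
  · -- comul_one
    rw [htc, hDcL, ← honestar, map_one, mul_one, hσϱ, hβ1, Algebra.TensorProduct.one_def]

end StarAux



/-- (Theorem 4.6) `Hᵠ = (H, α, m, η, Δᵠ, ε)` with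
`Δᵠ(x) = (σΔ(x))ϱ` is a Hom-bialgebra. -/
theorem twisted_is_hom_bialgebra
    {k H : Type*} [CommRing k] [AddCommGroup H] [Module k H]
    (mul : H →ₗ[k] H →ₗ[k] H) (one : H) (alpha : H ≃ₗ[k] H)
    (comul : H →ₗ[k] H ⊗[k] H) (counit : H →ₗ[k] k) (σ ϱ : H ⊗[k] H)
    (hH : IsMonHomBialgebra mul one alpha comul counit)
    (hσ : IsTwist mul one alpha comul counit σ ϱ) :
    IsHomBialgebra mul one alpha (twistComul mul comul σ ϱ) counit := by
  letI := starRing mul one alpha comul counit hH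
  letI := starAlgebra mul one alpha comul counit hH
  exact aux_main mul one alpha comul counit σ ϱ hH hσ (fun _ _ => rfl) rfl

end HomTwist
end
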